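/- For 0 < q < 1 and z₁, z₂ complex with z₁ ≠ 0, z₂ ≠ 0, and fixed n: the limit as m → ∞ of z₁^{-m} H_{m,n}(z₁, z₂ | q) equals z₂^n (1/(z₁z₂); q)_n, where (a;q)_n = ∏_{j=0}^{n-1}(1 - a q^j). -/

import Mathlib

open Finset Filter

noncomputable def qPoch (a q : ℂ) (n : ℕ) : ℂ :=
  ∏ j ∈ Finset.range n, (1 - a * q ^ j)

noncomputable def qbinom (q : ℂ) : ℕ → ℕ → ℂ
  | _, 0 => 1
  | 0, _ + 1 => 0
  | m + 1, k + 1 => qbinom q m k + q ^ (k + 1) * qbinom q m (k + 1)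

/-- The first q-analogue of the 2D Hermite polynomials. -/
noncomputable def H2D (q z1 z2 : ℂ) (m n : ℕ) : ℂ :=
  ∑ k ∈ Finset.range (min m n + 1),
    qbinom q m k * qbinom q n k * (-1) ^ k * q ^ (k.choose 2) * qPoch q q k *
      z1 ^ (m - k) * z2 ^ (n - k)

/-- The second q-analogue of the 2D Hermite polynomials. -/
noncomputable def h2D (q z1 z2 : ℂ) (m n : ℕ) : ℂ :=
  ∑ j ∈ Finset.range (min m n + 1),
    qbinom q m j * qbinom q n j * q ^ ((m - j) * (n - j)) * (-1) ^ j * qPoch q q j *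
      z1 ^ (m - j) * z2 ^ (n - j)

/-- The q-2D ultraspherical (q-disk / q-Zernike) polynomials. -/
noncomputable def p2D (q b z1 z2 : ℂ) (m n : ℕ) : ℂ :=
  ∑ k ∈ Finset.range (min m n + 1),
    qbinom q m k * qbinom q n k * (-1) ^ k * q ^ (k.choose 2) * qPoch q q k *
      qPoch (b * q) q (m + n - k) * z1 ^ (m - k) * z2 ^ (n - k)

/-- The infinite q-Pochhammer product (a;q)_∞. -/
noncomputable def qPochInf (a q : ℂ) : ℂ :=
  ∏' j : ℕ, (1 - a * q ^ j)

lemma qPoch_succ (a q : ℂ) (n : ℕ) : qPoch a q (n+1) = qPoch a q n * (1 - a * q ^ n) :=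
  Finset.prod_range_succ _ _

lemma qPoch_shift (a q : ℂ) (n : ℕ) : qPoch a q (n+1) = (1 - a) * qPoch (q * a) q n := by
  rw [qPoch, Finset.prod_range_succ']
  simp only [pow_zero, mul_one, qPoch]
  rw [mul_comm]
  congr 1
  apply Finset.prod_congr rfl
  intro i _
  ring

lemma qbinom_zero (q : ℂ) (m : ℕ) : qbinom q m 0 = 1 := by
  cases m <;> rfl

lemma qbinom_succ_succ (q : ℂ) (m k : ℕ) :
    qbinom q (m+1) (k+1) = qbinom q m k + q ^ (k + 1) * qbinom q m (k + 1) := rfl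

lemma qbinom_eq_zero (q : ℂ) : ∀ m k, m < k → qbinom q m k = 0 := by
  intro m
  induction m with
  | zero => intro k hk; obtain ⟨j, rfl⟩ := Nat.exists_eq_add_of_lt hk; rfl
  | succ m ih =>
    intro k hk
    obtain ⟨j, rfl⟩ : ∃ j, k = j + 1 := ⟨k - 1, by omega⟩
    rw [qbinom_succ_succ, ih j (by omega), ih (j+1) (by omega)]
    ring

lemma qbinom_mul_poch (q : ℂ) : ∀ k d : ℕ,
    qbinom q (k + d) k * (qPoch q q k * qPoch q q d) = qPoch q q (k + d) := by
  intro k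
  induction k with
  | zero => intro d; simp [qbinom_zero, qPoch]
  | succ k ihk =>
    intro d
    induction d with
    | zero =>
      have h1 : qbinom q (k + 1) (k + 1) = qbinom q k k := by
        rw [qbinom_succ_succ, qbinom_eq_zero q k (k+1) (by omega)]; ring
      have h2 : qbinom q (k + 0) k * (qPoch q q k * qPoch q q 0) = qPoch q q (k + 0) := ihk 0
      simp only [Nat.add_zero] at h2 ⊢
      rw [h1]
      simp only [qPoch, Finset.prod_range_zero, mul_one] at h2 ⊢
      rw [Finset.prod_range_succ, ← mul_assoc, h2]
    | succ d ihd =>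
      have hrec : qbinom q (k + 1 + (d + 1)) (k + 1)
          = qbinom q (k + (d + 1)) k + q ^ (k + 1) * qbinom q (k + (d + 1)) (k + 1) := by
        have : k + 1 + (d + 1) = (k + (d + 1)) + 1 := by omega
        rw [this, qbinom_succ_succ]
      have hA := ihk (d + 1)
      have hB : qbinom q (k + 1 + d) (k + 1) * (qPoch q q (k+1) * qPoch q q d)
          = qPoch q q (k + 1 + d) := ihd
      have e1 : k + (d + 1) = k + 1 + d := by omega
      rw [e1] at hA hrec
      have e2 : k + 1 + (d + 1) = (k + 1 + d) + 1 := by omega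
      rw [qPoch_succ] at hA hB
      rw [hrec, e2, qPoch_succ q q (k+1+d), qPoch_succ q q k, qPoch_succ q q d]
      linear_combination (1 - q * q ^ k) * hA + (q ^ (k + 1) * (1 - q * q ^ d)) * hB

lemma qbt (q : ℂ) : ∀ (n : ℕ) (x : ℂ),
    (∑ k ∈ Finset.range (n+1), qbinom q n k * (-1) ^ k * q ^ (k.choose 2) * x ^ k)
      = qPoch x q n := by
  intro n
  induction n with
  | zero => intro x; simp [qbinom_zero, qPoch]
  | succ n ih =>
    intro x
    set g : ℕ → ℂ := fun k => qbinom q n k * (-1) ^ k * q ^ (k.choose 2) * (q*x) ^ k with hgdef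
    rw [Finset.sum_range_succ' _ (n+1)]
    have h1 : ∀ k ∈ Finset.range (n+1),
        qbinom q (n+1) (k+1) * (-1) ^ (k+1) * q ^ ((k+1).choose 2) * x ^ (k+1)
          = -x * g k + g (k+1) := by
      intro k _
      have hc : (k+1).choose 2 = k.choose 2 + k := by
        simp [Nat.choose_succ_succ, Nat.choose_one_right, Nat.add_comm]
      simp only [hgdef, qbinom_succ_succ, hc]
      ring
    rw [Finset.sum_congr rfl h1, Finset.sum_add_distrib, ← Finset.mul_sum]
    have hsum1 : ∑ k ∈ Finset.range (n+1), g k = qPoch (q*x) q n := ih (q*x)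
    have hsum2 : ∑ k ∈ Finset.range (n+1), g (k+1) = qPoch (q*x) q n - 1 := by
      have e := Finset.sum_range_succ' g (n+1)
      rw [Finset.sum_range_succ g (n+1), hsum1] at e
      have hz : g (n+1) = 0 := by
        simp [hgdef, qbinom_eq_zero q n (n+1) (by omega)]
      have h0 : g 0 = 1 := by simp [hgdef, qbinom_zero]
      rw [hz, h0] at e
      linear_combination -e
    rw [hsum1, hsum2, qPoch_shift x q n]
    have f0 : qbinom q (n+1) 0 * (-1) ^ (0:ℕ) * q ^ (Nat.choose 0 2) * x ^ (0:ℕ) = 1 := by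
      simp [qbinom_zero]
    rw [f0]
    ring

lemma qPoch_ne_zero {q : ℝ} (hq0 : 0 < q) (hq1 : q < 1) (k : ℕ) :
    qPoch (q:ℂ) (q:ℂ) k ≠ 0 := by
  rw [qPoch]
  apply Finset.prod_ne_zero_iff.2
  intro j _
  intro hcon
  have h2 : (q:ℝ) ^ j ≤ 1 := pow_le_one₀ hq0.le hq1.le
  have h : (q:ℝ) * q ^ j < 1 := by nlinarith
  have : (1 - q * q ^ j : ℝ) = 0 := by exact_mod_cast hcon
  linarith

lemma qbinom_mul_poch' {q : ℝ} (hq0 : 0 < q) (hq1 : q < 1) (k d : ℕ) :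
    qbinom (q:ℂ) (k + d) k * qPoch (q:ℂ) (q:ℂ) k
      = ∏ i ∈ Finset.range k, (1 - (q:ℂ) * (q:ℂ) ^ (d + i)) := by
  have h := qbinom_mul_poch (q:ℂ) k d
  have hsplit : qPoch (q:ℂ) (q:ℂ) (k + d)
      = qPoch (q:ℂ) (q:ℂ) d * ∏ i ∈ Finset.range k, (1 - (q:ℂ) * (q:ℂ) ^ (d + i)) := by
    rw [qPoch, qPoch, Nat.add_comm k d, Finset.prod_range_add]
  rw [hsplit] at h
  have hd := qPoch_ne_zero hq0 hq1 d
  apply mul_right_cancel₀ hd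
  linear_combination h

lemma tendsto_prod_one {q : ℝ} (hq0 : 0 < q) (hq1 : q < 1) (k : ℕ) :
    Tendsto (fun m : ℕ => ∏ i ∈ Finset.range k, (1 - (q:ℂ) * (q:ℂ) ^ (m - k + i))) atTop
      (nhds 1) := by
  have h1 : (1:ℂ) = ∏ i ∈ Finset.range k, (1:ℂ) := by simp
  rw [h1]
  apply tendsto_finset_prod
  intro i _
  have hnorm : ‖(q:ℂ)‖ < 1 := by
    rw [Complex.norm_real, Real.norm_eq_abs, abs_of_pos hq0]; exact hq1
  have hpow : Tendsto (fun j : ℕ => (q:ℂ) ^ j) atTop (nhds 0) :=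
    tendsto_pow_atTop_nhds_zero_of_norm_lt_one hnorm
  have hexp : Tendsto (fun m : ℕ => m - k + i) atTop atTop := by
    apply tendsto_atTop_mono (f := fun m : ℕ => m - k) (fun m => Nat.le_add_right _ i)
    exact tendsto_sub_atTop_nat k
  have := (hpow.comp hexp).const_mul (q:ℂ)
  have h2 := tendsto_const_nhds (x := (1:ℂ)) (f := atTop (α := ℕ)) |>.sub this
  simpa using h2

lemma qbinom_tendsto {q : ℝ} (hq0 : 0 < q) (hq1 : q < 1) (k : ℕ) :
    Tendsto (fun m : ℕ => qbinom (q:ℂ) m k) atTop (nhds (qPoch (q:ℂ) (q:ℂ) k)⁻¹) := by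
  have hk := qPoch_ne_zero hq0 hq1 k
  have h1 : Tendsto (fun m : ℕ => qbinom (q:ℂ) m k * qPoch (q:ℂ) (q:ℂ) k) atTop (nhds 1) := by
    apply (tendsto_prod_one hq0 hq1 k).congr'
    filter_upwards [eventually_ge_atTop k] with m hm
    have : k + (m - k) = m := by omega
    rw [← qbinom_mul_poch' hq0 hq1 k (m - k), this]
  have h2 := h1.mul_const (qPoch (q:ℂ) (q:ℂ) k)⁻¹
  rw [one_mul] at h2
  apply h2.congr
  intro m
  field_simp


theorem stmt6 (n : ℕ) (z1 z2 : ℂ) (hz1 : z1 ≠ 0) (hz2 : z2 ≠ 0)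
    (q : ℝ) (hq0 : 0 < q) (hq1 : q < 1) :
    Tendsto (fun m : ℕ => z1⁻¹ ^ m * H2D (q : ℂ) z1 z2 m n) atTop
      (nhds (z2 ^ n * qPoch (1 / (z1 * z2)) (q : ℂ) n)) := by
  set c : ℕ → ℂ := fun k => qbinom (q:ℂ) n k * (-1) ^ k * (q:ℂ) ^ (k.choose 2) *
      qPoch (q:ℂ) (q:ℂ) k * z1⁻¹ ^ k * z2 ^ (n - k) with hc
  have key := tendsto_finset_sum (Finset.range (n+1))
    (fun k (_ : k ∈ Finset.range (n+1)) => (qbinom_tendsto hq0 hq1 k).mul_const (c k))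
  have hval : ∑ k ∈ Finset.range (n+1), (qPoch (q:ℂ) (q:ℂ) k)⁻¹ * c k
      = z2 ^ n * qPoch (1 / (z1 * z2)) (q:ℂ) n := by
    rw [← qbt (q:ℂ) n (1 / (z1 * z2)), Finset.mul_sum]
    apply Finset.sum_congr rfl
    intro k hk
    have hk' : k ≤ n := Nat.lt_succ_iff.mp (Finset.mem_range.mp hk)
    have hz2p : z2 ^ (n - k) = z2 ^ n * (z2 ^ k)⁻¹ := by
      rw [pow_sub₀ z2 hz2 hk']
    have hp := qPoch_ne_zero hq0 hq1 k
    rw [hc]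
    simp only []
    rw [hz2p]
    field_simp
    rw [mul_assoc _ (z2 ^ k), ← mul_pow, show z2 * (1 / (z1 * z2)) = 1 / z1 by field_simp]
  rw [← hval]
  refine Filter.Tendsto.congr' ?_ key
  filter_upwards [eventually_ge_atTop n] with m hm
  rw [H2D, min_eq_right hm, Finset.mul_sum]
  apply Finset.sum_congr rfl
  intro k hk
  have hk' : k ≤ n := Nat.lt_succ_iff.mp (Finset.mem_range.mp hk)
  have hkm : k ≤ m := le_trans hk' hm
  have hz1p : z1 ^ (m - k) = z1 ^ m * (z1 ^ k)⁻¹ := by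
    rw [pow_sub₀ z1 hz1 hkm]
  rw [hz1p, hc]
  simp only []
  field_simp
  rw [mul_assoc _ ((1 / z1) ^ k), mul_assoc _ ((1 / z1) ^ m), ← mul_pow, ← mul_pow, one_div, inv_mul_cancel₀ hz1, one_pow, one_pow]
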